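/- Let $0 < \beta_j < 1/2$, let $D_j \subset [0,(1-\beta_j)/\beta_j]$ be finite sets with $|d - d'| > 1$ for distinct $d, d' \in D_j$, and let $b(k) = \beta_1\cdots\beta_k$. Suppose $x' = \sum_{j=1}^k d_j' b(j)$ and $x = \sum_{j=1}^k d_j b(j)$ with $d_j, d_j' \in D_j$, where there exists $1 \leq \ell \leq k$ such that $d_j = d_j'$ for $j < \ell$, $d_\ell > d_\ell' + 1$, and $d_j$ is minimal in $D_j$, $d_j'$ is maximal in $D_j$ for $\ell < j \leq k$. Then $x - x' - b(k) \geq (d_\ell - d_\ell' - 1)b(\ell) > 0$; in particular the basic intervals $[x', x' + b(k)]$ and $[x, x + b(k)]$ are disjoint with a positive gap. -/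

import Mathlib

/-- Remark 2.2 (gap estimate): with `b(k) = β_1⋯β_k`, if `x' = ∑ d'_j b(j)` and
`x = ∑ d_j b(j)` where the digit sequences agree below level `ℓ`, `d_ℓ > d'_ℓ + 1`,
and `d_j` is minimal, `d'_j` maximal in `D_j` for `ℓ < j ≤ k`, then
`x - x' - b(k) ≥ (d_ℓ - d'_ℓ - 1) b(ℓ) > 0`; in particular the basic intervals
`[x', x' + b(k)]` and `[x, x + b(k)]` are disjoint with a positive gap. -/
theorem basic_interval_gap (β : ℕ → ℝ) (D : ℕ → Finset ℝ) (d d' : ℕ → ℝ) (ℓ k : ℕ)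
    (hβ : ∀ j, 0 < β j ∧ β j < 1 / 2)
    (hD : ∀ j, ∀ x ∈ D j, x ∈ Set.Icc (0 : ℝ) ((1 - β j) / β j))
    (hDsep : ∀ j, ∀ x ∈ D j, ∀ y ∈ D j, x ≠ y → 1 < |x - y|)
    (hd : ∀ j, d j ∈ D j) (hd' : ∀ j, d' j ∈ D j)
    (hℓ : 1 ≤ ℓ) (hℓk : ℓ ≤ k)
    (hagree : ∀ j, j < ℓ → d j = d' j)
    (hjump : d' ℓ + 1 < d ℓ)
    (hmin : ∀ j, ℓ < j → j ≤ k → ∀ e ∈ D j, d j ≤ e)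
    (hmax : ∀ j, ℓ < j → j ≤ k → ∀ e ∈ D j, e ≤ d' j) :
    (d ℓ - d' ℓ - 1) * (∏ i ∈ Finset.Icc 1 ℓ, β i)
        ≤ (∑ j ∈ Finset.Icc 1 k, d j * ∏ i ∈ Finset.Icc 1 j, β i)
          - (∑ j ∈ Finset.Icc 1 k, d' j * ∏ i ∈ Finset.Icc 1 j, β i)
          - (∏ i ∈ Finset.Icc 1 k, β i) ∧
    0 < (d ℓ - d' ℓ - 1) * (∏ i ∈ Finset.Icc 1 ℓ, β i) ∧
    (∑ j ∈ Finset.Icc 1 k, d' j * ∏ i ∈ Finset.Icc 1 j, β i) + (∏ i ∈ Finset.Icc 1 k, β i)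
      < ∑ j ∈ Finset.Icc 1 k, d j * ∏ i ∈ Finset.Icc 1 j, β i ∧
    Disjoint
      (Set.Icc (∑ j ∈ Finset.Icc 1 k, d' j * ∏ i ∈ Finset.Icc 1 j, β i)
        ((∑ j ∈ Finset.Icc 1 k, d' j * ∏ i ∈ Finset.Icc 1 j, β i) + ∏ i ∈ Finset.Icc 1 k, β i))
      (Set.Icc (∑ j ∈ Finset.Icc 1 k, d j * ∏ i ∈ Finset.Icc 1 j, β i)
        ((∑ j ∈ Finset.Icc 1 k, d j * ∏ i ∈ Finset.Icc 1 j, β i) + ∏ i ∈ Finset.Icc 1 k, β i)) := by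
  set b : ℕ → ℝ := fun j => ∏ i ∈ Finset.Icc 1 j, β i with hbdef
  have hbpos : ∀ j, 0 < b j := fun j => Finset.prod_pos (fun i _ => (hβ i).1)
  have hbsucc : ∀ j : ℕ, b (j + 1) = b j * β (j + 1) := by
    intro j
    simp only [hbdef]
    rw [Finset.prod_Icc_succ_top (Nat.le_add_left 1 j)]
  -- telescoping sum
  have tel : ∀ m : ℕ, ℓ ≤ m →
      ∑ j ∈ Finset.Ioc ℓ m, (1 - β j) / β j * b j = b ℓ - b m := by
    intro m hm
    induction m with
    | zero => simp [Nat.le_zero.mp hm]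
    | succ n ih =>
      rcases Nat.lt_or_ge ℓ (n + 1) with h | h
      · have hn : ℓ ≤ n := Nat.lt_succ_iff.mp h
        rw [← Finset.Icc_add_one_left_eq_Ioc, Finset.sum_Icc_succ_top (by omega : ℓ + 1 ≤ n + 1),
          Finset.Icc_add_one_left_eq_Ioc, ih hn, hbsucc n]
        have hβn := (hβ (n + 1)).1
        field_simp
        ring
      · have : ℓ = n + 1 := le_antisymm hm h
        simp [this]
  have tel' := tel k hℓk
  -- split the difference sum
  have hsplit : (∑ j ∈ Finset.Icc 1 k, d j * b j) - (∑ j ∈ Finset.Icc 1 k, d' j * b j)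
      = ∑ j ∈ Finset.Icc 1 k, (d j - d' j) * b j := by
    rw [← Finset.sum_sub_distrib]
    congr 1; ext j; ring
  have hIcc : ∀ n : ℕ, Finset.Icc 1 n = Finset.Ioc 0 n := by
    intro n; rw [← Finset.Icc_add_one_left_eq_Ioc, zero_add]
  have hcons : (∑ j ∈ Finset.Ioc 0 ℓ, (d j - d' j) * b j)
      + (∑ j ∈ Finset.Ioc ℓ k, (d j - d' j) * b j)
      = ∑ j ∈ Finset.Ioc 0 k, (d j - d' j) * b j :=
    Finset.sum_Ioc_consecutive _ (Nat.zero_le ℓ) hℓk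
  -- the low part equals the ℓ-th term
  obtain ⟨m, rfl⟩ : ∃ m, ℓ = m + 1 := ⟨ℓ - 1, by omega⟩
  have hlow : (∑ j ∈ Finset.Ioc 0 (m + 1), (d j - d' j) * b j)
      = (d (m + 1) - d' (m + 1)) * b (m + 1) := by
    rw [← Finset.Icc_add_one_left_eq_Ioc, Finset.sum_Icc_succ_top (by omega : 0 + 1 ≤ m + 1)]
    have : ∑ j ∈ Finset.Icc (0 + 1) m, (d j - d' j) * b j = 0 := by
      apply Finset.sum_eq_zero
      intro j hj
      have : j < m + 1 := by
        have := (Finset.mem_Icc.mp hj).2; omega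
      rw [hagree j this]; ring
    rw [this, zero_add]
  -- bound the high part
  have hhigh : -(b (m + 1) - b k) ≤ ∑ j ∈ Finset.Ioc (m + 1) k, (d j - d' j) * b j := by
    rw [← tel', ← Finset.sum_neg_distrib]
    apply Finset.sum_le_sum
    intro j hj
    have hjmem := Finset.mem_Ioc.mp hj
    have h1 : 0 ≤ d j := (hD j (d j) (hd j)).1
    have h2 : d' j ≤ (1 - β j) / β j := (hD j (d' j) (hd' j)).2
    have := hbpos j
    nlinarith
  have key : (d (m + 1) - d' (m + 1) - 1) * b (m + 1)
      ≤ (∑ j ∈ Finset.Icc 1 k, d j * b j) - (∑ j ∈ Finset.Icc 1 k, d' j * b j) - b k := by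
    rw [hsplit, hIcc, ← hcons, hlow]
    linarith
  have hgap : 0 < (d (m + 1) - d' (m + 1) - 1) * b (m + 1) := by
    have := hbpos (m + 1)
    nlinarith
  refine ⟨key, hgap, by linarith, ?_⟩
  rw [Set.disjoint_left]
  intro a ha ha'
  have h1 : a ≤ (∑ j ∈ Finset.Icc 1 k, d' j * b j) + b k := ha.2
  have h2 : (∑ j ∈ Finset.Icc 1 k, d j * b j) ≤ a := ha'.1
  linarith
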